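/- Suppose φ : [0,1] → ℝ is continuously differentiable on (0,1) with |φ'(p)| ≤ W ln(1/p) + c for all p ∈ (0,1) and some constants W > 0, c ≥ 0. Then φ is β-Hölder continuous on [0,1] for every β ∈ (0,1); moreover one may take the Hölder constant to be W·Γ(1 + 1/(1-β))^{1-β} + c. -/

import Mathlib

open Set MeasureTheory Real

lemma exp_neg_image : (fun t : ℝ => Real.exp (-t)) '' Set.Ioi 0 = Set.Ioo 0 1 := by
  ext p
  constructor
  · rintro ⟨t, ht, rfl⟩
    exact ⟨Real.exp_pos _, by
      rw [Real.exp_lt_one_iff]; simpa using ht⟩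
  · intro hp
    exact ⟨-Real.log p, by simpa using Real.log_neg hp.1 hp.2,
      by simp [Real.exp_log hp.1]⟩

lemma neg_log_rpow_integral (q : ℝ) (hq : 0 < q) :
    IntegrableOn (fun p => (-Real.log p) ^ q) (Set.Ioo (0:ℝ) 1) ∧
    ∫ p in Set.Ioo (0:ℝ) 1, (-Real.log p) ^ q = Real.Gamma (q + 1) := by
  have hs : MeasurableSet (Set.Ioi (0:ℝ)) := measurableSet_Ioi
  have hf' : ∀ t ∈ Set.Ioi (0:ℝ),
      HasDerivWithinAt (fun t : ℝ => Real.exp (-t)) (-Real.exp (-t)) (Set.Ioi 0) t := by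
    intro t _
    have h := ((Real.hasDerivAt_exp (-t)).comp t ((hasDerivAt_id t).neg))
    simpa [Function.comp_def] using h.hasDerivWithinAt
  have hinj : Set.InjOn (fun t : ℝ => Real.exp (-t)) (Set.Ioi 0) := by
    intro a _ b _ h
    have := Real.exp_injective h
    linarith [neg_inj.mp this]
  have heqon : Set.EqOn (fun t => |(-Real.exp (-t))| • ((-Real.log (Real.exp (-t))) ^ q))
      (fun x : ℝ => Real.exp (-x) * x ^ (q + 1 - 1)) (Set.Ioi 0) := by
    intro t ht
    simp [Real.log_exp, abs_of_pos (Real.exp_pos _), smul_eq_mul]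
  have hconv := Real.GammaIntegral_convergent (by linarith : (0:ℝ) < q + 1)
  have hint : IntegrableOn (fun p => (-Real.log p) ^ q) (Set.Ioo (0:ℝ) 1) := by
    rw [← exp_neg_image]
    rw [MeasureTheory.integrableOn_image_iff_integrableOn_abs_deriv_smul hs hf' hinj]
    exact hconv.congr_fun heqon.symm hs
  refine ⟨hint, ?_⟩
  rw [← exp_neg_image,
    MeasureTheory.integral_image_eq_integral_abs_deriv_smul hs hf' hinj,
    Real.Gamma_eq_integral (by linarith : (0:ℝ) < q + 1)]
  exact MeasureTheory.setIntegral_congr_fun hs heqon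



/-- If `φ` is continuous on `[0,1]`, continuously differentiable on `(0,1)`
with `|φ'(p)| ≤ W log(1/p) + c`, then `φ` is `β`-Hölder continuous on `[0,1]` for
every `β ∈ (0,1)`, with Hölder constant `W · Γ(1 + 1/(1-β))^(1-β) + c`. -/
theorem holder_of_log_derivative_bound (W c : ℝ) (hW : 0 < W) (hc : 0 ≤ c)
    (φ φ' : ℝ → ℝ)
    (hcont : ContinuousOn φ (Set.Icc 0 1))
    (hderiv : ∀ p ∈ Set.Ioo (0:ℝ) 1, HasDerivAt φ (φ' p) p)
    (hderivcont : ContinuousOn φ' (Set.Ioo 0 1))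
    (hbound : ∀ p ∈ Set.Ioo (0:ℝ) 1, |φ' p| ≤ W * Real.log (1 / p) + c) :
    ∀ β ∈ Set.Ioo (0:ℝ) 1, ∀ x ∈ Set.Icc (0:ℝ) 1, ∀ y ∈ Set.Icc (0:ℝ) 1,
      |φ x - φ y| ≤ (W * (Real.Gamma (1 + 1 / (1 - β))) ^ (1 - β) + c) * |x - y| ^ β := by
  intro β hβ x hx y hy
  obtain ⟨hβ0, hβ1⟩ := hβ
  have hβ1' : (0:ℝ) < 1 - β := by linarith
  set q : ℝ := 1 / (1 - β) with hqdef
  set q' : ℝ := 1 / β with hq'def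
  have hq1 : 1 < q := by
    rw [hqdef, lt_div_iff₀ hβ1']; linarith
  have hq0 : 0 < q := by linarith
  have hqinv : 1 / q = 1 - β := by rw [hqdef, one_div_one_div]
  have hq'inv : 1 / q' = β := by rw [hq'def, one_div_one_div]
  have hq'0 : 0 < q' := by rw [hq'def]; positivity
  have hconj : Real.HolderConjugate q q' := Real.holderConjugate_iff.mpr ⟨hq1, by rw [inv_eq_one_div, inv_eq_one_div, hqinv, hq'inv]; ring⟩
  set G : ℝ := Real.Gamma (1 + 1 / (1 - β)) with hGdef
  have hG : 0 < G := Real.Gamma_pos_of_pos (by positivity)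
  obtain ⟨hqint, hqval⟩ := neg_log_rpow_integral q hq0
  have hGval : ∫ p in Set.Ioo (0:ℝ) 1, (-Real.log p) ^ q = G := by
    rw [hqval, hGdef, add_comm]
  -- set K
  set K : ℝ := W * G ^ (1 - β) + c with hKdef
  have hK0 : 0 ≤ K := by positivity
  -- key lemma for ordered pair
  have key : ∀ a b : ℝ, 0 ≤ a → a ≤ b → b ≤ 1 → |φ b - φ a| ≤ K * (b - a) ^ β := by
    intro a b ha hab hb1
    rcases eq_or_lt_of_le hab with rfl | hab'
    · simp [Real.zero_rpow (ne_of_gt hβ0), hK0]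
    set d : ℝ := b - a with hddef
    have hd0 : 0 < d := by simp [hddef]; linarith
    have hd1 : d ≤ 1 := by simp [hddef]; linarith
    have hIooSub : Set.Ioo a b ⊆ Set.Ioo (0:ℝ) 1 := fun p hp => ⟨lt_of_le_of_lt ha hp.1, lt_of_lt_of_le hp.2 hb1⟩
    -- integrability of the dominating function on Ioo a b
    have hnl_int : IntegrableOn (fun p => -Real.log p) (Set.Ioo (0:ℝ) 1) := by
      have := (neg_log_rpow_integral 1 one_pos).1
      exact this.congr_fun (fun p _ => by simp only [Real.rpow_one]) measurableSet_Ioo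
    have hdom_int01 : IntegrableOn (fun p => W * (-Real.log p) + c) (Set.Ioo (0:ℝ) 1) := by
      apply Integrable.add (hnl_int.const_mul W)
      exact integrableOn_const (by simp [Real.volume_Ioo])
    have hdom_int : IntegrableOn (fun p => W * (-Real.log p) + c) (Set.Ioo a b) :=
      hdom_int01.mono_set hIooSub
    -- φ' integrable
    have hφ'meas : AEStronglyMeasurable φ' (volume.restrict (Set.Ioo a b)) :=
      ((hderivcont.mono hIooSub).aestronglyMeasurable measurableSet_Ioo)
    have hbound' : ∀ p ∈ Set.Ioo a b, |φ' p| ≤ W * (-Real.log p) + c := by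
      intro p hp
      have := hbound p (hIooSub hp)
      rwa [one_div, Real.log_inv] at this
    have hφ'int : IntegrableOn φ' (Set.Ioo a b) := by
      refine MeasureTheory.Integrable.mono hdom_int hφ'meas ?_
      rw [ae_restrict_iff' measurableSet_Ioo]
      filter_upwards with p hp
      have h1 := hbound' p hp
      have h2 : 0 ≤ W * (-Real.log p) + c := le_trans (abs_nonneg _) h1
      show ‖φ' p‖ ≤ ‖W * (-Real.log p) + c‖
      rw [Real.norm_eq_abs, Real.norm_eq_abs, abs_of_nonneg h2]
      exact h1
    have hφ'ii : IntervalIntegrable φ' volume a b := by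
      rw [intervalIntegrable_iff_integrableOn_Ioo_of_le hab]
      exact hφ'int
    -- FTC
    have hftc : ∫ p in a..b, φ' p = φ b - φ a := by
      apply intervalIntegral.integral_eq_sub_of_hasDeriv_right_of_le hab
        (hcont.mono (Set.Icc_subset_Icc ha hb1))
        (fun p hp => (hderiv p (hIooSub hp)).hasDerivWithinAt) hφ'ii
    have habs : |φ b - φ a| ≤ ∫ p in Set.Ioo a b, (W * (-Real.log p) + c) := by
      rw [← hftc]
      calc |∫ p in a..b, φ' p| ≤ ∫ p in a..b, |φ' p| := by
            simpa [Real.norm_eq_abs] using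
              intervalIntegral.norm_integral_le_integral_norm (f := φ') (a := a) (b := b) hab
        _ = ∫ p in Set.Ioo a b, |φ' p| := by
            rw [intervalIntegral.integral_of_le hab, MeasureTheory.integral_Ioc_eq_integral_Ioo]
        _ ≤ ∫ p in Set.Ioo a b, (W * (-Real.log p) + c) := by
            apply MeasureTheory.setIntegral_mono_on (hφ'int.abs) hdom_int measurableSet_Ioo
            exact hbound'
    -- Young's inequality with parameter l
    set l : ℝ := (G / d) ^ ((1 - β) * β) with hldef
    have hl0 : 0 < l := Real.rpow_pos_of_pos (div_pos hG hd0) _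
    have hGd0 : (0:ℝ) < G / d := div_pos hG hd0
    have hlq : l ^ q = (G / d) ^ β := by
      rw [hldef, ← Real.rpow_mul hGd0.le]
      congr 1
      rw [hqdef]
      field_simp
    have hlq' : l ^ q' = (G / d) ^ (1 - β) := by
      rw [hldef, ← Real.rpow_mul hGd0.le]
      congr 1
      rw [hq'def]
      field_simp
    have hyoung : ∀ p ∈ Set.Ioo a b,
        -Real.log p ≤ (-Real.log p) ^ q / (l ^ q * q) + l ^ q' / q' := by
      intro p hp
      have hp01 := hIooSub hp
      have hnl0 : 0 ≤ -Real.log p := by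
        have := Real.log_nonpos hp01.1.le hp01.2.le; linarith
      have h := Real.young_inequality_of_nonneg (div_nonneg hnl0 hl0.le) hl0.le hconj
      rw [div_mul_cancel₀ _ hl0.ne'] at h
      calc -Real.log p ≤ ((-Real.log p) / l) ^ q / q + l ^ q' / q' := h
        _ = (-Real.log p) ^ q / (l ^ q * q) + l ^ q' / q' := by
            rw [Real.div_rpow hnl0 hl0.le, div_div]
    have hconst_int : IntegrableOn (fun _ : ℝ => l ^ q' / q') (Set.Ioo a b) :=
      integrableOn_const (by simp [Real.volume_Ioo])
    have hqint' : IntegrableOn (fun p => (-Real.log p) ^ q / (l ^ q * q)) (Set.Ioo a b) :=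
      (hqint.mono_set hIooSub).div_const _
    have hIqle : ∫ p in Set.Ioo a b, (-Real.log p) ^ q ≤ G := by
      rw [← hGval]
      refine MeasureTheory.setIntegral_mono_set hqint ?_
        (HasSubset.Subset.eventuallyLE hIooSub)
      filter_upwards [MeasureTheory.ae_restrict_mem measurableSet_Ioo] with p hp
      refine Real.rpow_nonneg ?_ _
      have := Real.log_nonpos hp.1.le hp.2.le; linarith
    have hmeasd : (volume (Set.Ioo a b)).toReal = d := by
      rw [Real.volume_Ioo, ENNReal.toReal_ofReal hd0.le]
    have hint_nl : ∫ p in Set.Ioo a b, (-Real.log p) ≤ G ^ (1 - β) * d ^ β := by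
      have step1 : ∫ p in Set.Ioo a b, (-Real.log p)
          ≤ ∫ p in Set.Ioo a b, ((-Real.log p) ^ q / (l ^ q * q) + l ^ q' / q') := by
        exact MeasureTheory.setIntegral_mono_on (hnl_int.mono_set hIooSub)
          (hqint'.add hconst_int) measurableSet_Ioo hyoung
      have step2 : ∫ p in Set.Ioo a b, ((-Real.log p) ^ q / (l ^ q * q) + l ^ q' / q')
          = (∫ p in Set.Ioo a b, (-Real.log p) ^ q) / (l ^ q * q) + d * (l ^ q' / q') := by
        rw [MeasureTheory.integral_add hqint' hconst_int, MeasureTheory.integral_div,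
          MeasureTheory.setIntegral_const, smul_eq_mul, measureReal_def, hmeasd]
      have hden : 0 < l ^ q * q := by positivity
      have step3 : (∫ p in Set.Ioo a b, (-Real.log p) ^ q) / (l ^ q * q) + d * (l ^ q' / q')
          ≤ G / (l ^ q * q) + d * (l ^ q' / q') := by
        gcongr
      have h1G : G ^ (1 - β) * G ^ β = G := by
        rw [← Real.rpow_add hG]; simp
      have h1d : d ^ (1 - β) * d ^ β = d := by
        rw [← Real.rpow_add hd0]; simp
      have h2d : (0:ℝ) < d ^ β := Real.rpow_pos_of_pos hd0 _
      have h2d' : (0:ℝ) < d ^ (1 - β) := Real.rpow_pos_of_pos hd0 _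
      have h3G : (0:ℝ) < G ^ β := Real.rpow_pos_of_pos hG _
      have key1 : G / (G ^ β / d ^ β) = G ^ (1 - β) * d ^ β := by
        rw [div_div_eq_mul_div, div_eq_iff h3G.ne']
        linear_combination (-(d ^ β)) * h1G
      have key2 : d * (G ^ (1 - β) / d ^ (1 - β)) = G ^ (1 - β) * d ^ β := by
        rw [show d * (G ^ (1 - β) / d ^ (1 - β)) = d * G ^ (1 - β) / d ^ (1 - β) from by ring,
          div_eq_iff h2d'.ne']
        linear_combination (-(G ^ (1 - β))) * h1d
      have e1 : G / (l ^ q * q) = (1 - β) * (G ^ (1 - β) * d ^ β) := by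
        rw [hlq, Real.div_rpow hG.le hd0.le, hqdef,
          show G ^ β / d ^ β * (1 / (1 - β)) = (G ^ β / d ^ β) / (1 - β) from by ring,
          div_div_eq_mul_div, mul_comm G (1 - β), mul_div_assoc, key1]
      have e2 : d * (l ^ q' / q') = β * (G ^ (1 - β) * d ^ β) := by
        rw [hlq', Real.div_rpow hG.le hd0.le, hq'def,
          show G ^ (1 - β) / d ^ (1 - β) / (1 / β) = β * (G ^ (1 - β) / d ^ (1 - β)) from by
            rw [div_div_eq_mul_div, div_one, mul_comm],
          show d * (β * (G ^ (1 - β) / d ^ (1 - β))) = β * (d * (G ^ (1 - β) / d ^ (1 - β)))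
            from by ring, key2]
      calc ∫ p in Set.Ioo a b, (-Real.log p) ≤ _ := step1
        _ = _ := step2
        _ ≤ G / (l ^ q * q) + d * (l ^ q' / q') := step3
        _ = ((1 - β) + β) * (G ^ (1 - β) * d ^ β) := by rw [e1, e2]; ring
        _ = G ^ (1 - β) * d ^ β := by ring_nf
    have h1 : ∫ p in Set.Ioo a b, (W * (-Real.log p) + c)
        = W * (∫ p in Set.Ioo a b, (-Real.log p)) + c * d := by
      rw [MeasureTheory.integral_add ((hnl_int.mono_set hIooSub).const_mul W)
        (integrableOn_const (by simp [Real.volume_Ioo])),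
        MeasureTheory.integral_const_mul, MeasureTheory.setIntegral_const, smul_eq_mul, measureReal_def, hmeasd,
        mul_comm d c]
    have hcd : c * d ≤ c * d ^ β := by
      refine mul_le_mul_of_nonneg_left ?_ hc
      calc d = d ^ (1:ℝ) := (Real.rpow_one d).symm
        _ ≤ d ^ β := Real.rpow_le_rpow_of_exponent_ge hd0 hd1 hβ1.le
    calc |φ b - φ a| ≤ ∫ p in Set.Ioo a b, (W * (-Real.log p) + c) := habs
      _ = W * (∫ p in Set.Ioo a b, (-Real.log p)) + c * d := h1
      _ ≤ W * (G ^ (1 - β) * d ^ β) + c * d :=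
          add_le_add_left (mul_le_mul_of_nonneg_left hint_nl hW.le) _
      _ ≤ W * (G ^ (1 - β) * d ^ β) + c * d ^ β := add_le_add_right hcd _
      _ = K * d ^ β := by rw [hKdef]; ring
  -- conclude by symmetry
  rcases le_total y x with h | h
  · have := key y x hy.1 h hx.2
    rwa [abs_of_nonneg (sub_nonneg.mpr h)]
  · have := key x y hx.1 h hy.2
    rw [abs_sub_comm (φ x), abs_sub_comm x]
    rwa [abs_of_nonneg (sub_nonneg.mpr h)]
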